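/- For all n ≥ 2, D AExc_n^+(s,t) = D AExc_n^-(s,t) = (1/2) D A_n(s,t), where D = ∂/∂s + ∂/∂t, AExc_n^±(s,t) are the bivariate excedance polynomials over even/odd permutations of S_n, and A_n(s,t) = ∑_{π ∈ S_n} t^{exc(π)} s^{nexc(π)-1}. -/

import Mathlib

open Finset MvPolynomial

/-- Number of excedances of a permutation of `{0,…,n-1}`. -/
def excA {n : ℕ} (π : Equiv.Perm (Fin n)) : ℕ :=
  (Finset.univ.filter (fun i => i < π i)).card

/-- Number of non-excedances. -/
def nexcA {n : ℕ} (π : Equiv.Perm (Fin n)) : ℕ := n - excA π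

/-- Number of inversions. -/
def invA {n : ℕ} (π : Equiv.Perm (Fin n)) : ℕ :=
  (Finset.univ.filter (fun p : Fin n × Fin n => p.1 < p.2 ∧ π p.2 < π p.1)).card

/-- The bivariate excedance polynomial `A_n(s,t)` (with `s = X 0`, `t = X 1`). -/
noncomputable def Aexc (n : ℕ) : MvPolynomial (Fin 2) ℚ :=
  ∑ π : Equiv.Perm (Fin n), X 1 ^ excA π * X 0 ^ (nexcA π - 1)

/-- The bivariate excedance polynomial over even permutations. -/
noncomputable def AexcP (n : ℕ) : MvPolynomial (Fin 2) ℚ :=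
  ∑ π ∈ Finset.univ.filter (fun π : Equiv.Perm (Fin n) => Even (invA π)),
    X 1 ^ excA π * X 0 ^ (nexcA π - 1)

/-- The bivariate excedance polynomial over odd permutations. -/
noncomputable def AexcM (n : ℕ) : MvPolynomial (Fin 2) ℚ :=
  ∑ π ∈ Finset.univ.filter (fun π : Equiv.Perm (Fin n) => ¬ Even (invA π)),
    X 1 ^ excA π * X 0 ^ (nexcA π - 1)

/-- The operator `D = d/ds + d/dt`. -/
noncomputable def Dop (f : MvPolynomial (Fin 2) ℚ) : MvPolynomial (Fin 2) ℚ :=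
  pderiv 0 f + pderiv 1 f

/-! ### Auxiliary development -/

abbrev R2 := MvPolynomial (Fin 2) ℚ

lemma sign_eq_invA {n : ℕ} (σ : Equiv.Perm (Fin n)) :
    Equiv.Perm.sign σ = (-1 : ℤˣ) ^ invA σ := by
  have hsa : ∀ τ : Equiv.Perm (Fin n), Equiv.Perm.sign τ = Equiv.Perm.signAux τ := by
    intro τ
    refine Equiv.Perm.swap_induction_on τ ?_ ?_
    · simp [Equiv.Perm.signAux_one]
    · intro τ x y hxy ih
      rw [map_mul, Equiv.Perm.signAux_mul, ih, Equiv.Perm.sign_swap hxy,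
        Equiv.Perm.signAux_swap hxy]
  rw [hsa]
  unfold Equiv.Perm.signAux
  rw [Finset.prod_ite, Finset.prod_const, Finset.prod_const, one_pow, mul_one]
  congr 1
  unfold invA
  apply Finset.card_bij (fun a _ => ((a.2, a.1) : Fin n × Fin n))
  · rintro ⟨a1, a2⟩ ha
    simp only [Finset.mem_filter, Equiv.Perm.mem_finPairsLT] at ha
    simp only [Finset.mem_filter, Finset.mem_univ, true_and]
    exact ⟨ha.1, lt_of_le_of_ne ha.2 (fun h => absurd (σ.injective h) (ne_of_gt ha.1))⟩
  · rintro ⟨a1, a2⟩ ha ⟨b1, b2⟩ hb h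
    simp only [Prod.mk.injEq] at h
    simp [Sigma.ext_iff, h.1, h.2]
  · rintro ⟨p1, p2⟩ hp
    simp only [Finset.mem_filter, Finset.mem_univ, true_and] at hp
    refine ⟨⟨p2, p1⟩, ?_, rfl⟩
    simp only [Finset.mem_filter, Equiv.Perm.mem_finPairsLT]
    exact ⟨hp.1, le_of_lt hp.2⟩

noncomputable def matA (n : ℕ) : Matrix (Fin n) (Fin n) R2 :=
  Matrix.of fun i j => if j < i then X 1 else X 0

noncomputable def matL (m : ℕ) : Matrix (Fin (m+1)) (Fin (m+1)) R2 :=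
  Matrix.of fun i j => if (i : ℕ) = m then X 0 else if j = i then X 1 - X 0 else 0

noncomputable def matB (m : ℕ) : Matrix (Fin (m+1)) (Fin (m+1)) R2 :=
  Matrix.of fun i j => if j ≤ i then 1 else 0

lemma det_matL (m : ℕ) : (matL m).det = X 0 * (X 1 - X 0) ^ m := by
  rw [Matrix.det_of_lowerTriangular]
  · have : ∀ i : Fin (m+1), (matL m) i i = if (i:ℕ) = m then X 0 else X 1 - X 0 := by
      intro i; simp [matL]
    rw [Finset.prod_congr rfl fun i _ => this i]
    rw [Finset.prod_ite, Finset.prod_const, Finset.prod_const]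
    have h1 : (Finset.univ.filter (fun i : Fin (m+1) => (i:ℕ) = m)).card = 1 := by
      rw [Finset.card_eq_one]
      refine ⟨⟨m, Nat.lt_succ_self m⟩, ?_⟩
      ext x; simp [Fin.ext_iff]
    have h2 : (Finset.univ.filter (fun i : Fin (m+1) => ¬(i:ℕ) = m)).card = m := by
      have := Finset.card_filter_add_card_filter_not
        (s := (Finset.univ : Finset (Fin (m+1)))) (p := fun i : Fin (m+1) => (i:ℕ) = m)
      simp only [Finset.card_univ, Fintype.card_fin, h1] at this
      omega
    rw [h1, h2, pow_one]
  · intro i j hij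
    simp only [OrderDual.toDual_lt_toDual] at hij
    have h1 : (i:ℕ) ≠ m := by omega
    have : j ≠ i := ne_of_gt hij
    simp [matL, h1, this]

lemma det_matB (m : ℕ) : (matB m).det = 1 := by
  rw [Matrix.det_of_lowerTriangular]
  · simp [matB]
  · intro i j hij
    simp only [OrderDual.toDual_lt_toDual] at hij
    simp [matB, not_le_of_gt hij]

noncomputable def matU (m : ℕ) : Matrix (Fin (m+1)) (Fin (m+1)) R2 :=
  (matL m).submatrix (Equiv.subRight (1 : Fin (m+1))) id

lemma matU_apply (m : ℕ) (k j : Fin (m+1)) :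
    matU m k j = if k = 0 then X 0 else if (k : ℕ) = (j : ℕ) + 1 then X 1 - X 0 else 0 := by
  simp only [matU, Matrix.submatrix_apply, Equiv.subRight_apply, id_eq, matL, Matrix.of_apply]
  rcases eq_or_ne k 0 with hk | hk
  · subst hk
    have : ((0 - 1 : Fin (m+1)) : ℕ) = m := by
      simp [Fin.coe_sub_one]
    simp [this]
  · have hkv : (k : ℕ) ≠ 0 := fun h => hk (Fin.ext h)
    have hsub : ((k - 1 : Fin (m+1)) : ℕ) = (k : ℕ) - 1 := by
      rw [Fin.coe_sub_one, if_neg hk]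
    have hne : ((k - 1 : Fin (m+1)) : ℕ) ≠ m := by
      rw [hsub]; have := k.isLt; omega
    rw [if_neg hk, if_neg hne]
    congr 1
    simp only [eq_iff_iff]
    constructor
    · intro h
      have := congrArg Fin.val h
      rw [hsub] at this; omega
    · intro h
      apply Fin.ext
      rw [hsub]; omega

lemma det_matU (m : ℕ) : (matU m).det = (-1 : R2) ^ m * (X 0 * (X 1 - X 0) ^ m) := by
  have hperm : Equiv.subRight (1 : Fin (m+1)) = ((finRotate (m+1))⁻¹ : Equiv.Perm (Fin (m+1))) := by
    apply Equiv.ext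
    intro x
    have : finRotate (m+1) (x - 1) = x := by
      rw [finRotate_succ_apply]; simp
    have h2 : (Equiv.subRight (1 : Fin (m+1))) x = (finRotate (m+1))⁻¹ x := by
      rw [Equiv.subRight_apply, Equiv.Perm.inv_def]
      exact (Equiv.eq_symm_apply _).2 this
    exact h2
  rw [matU, hperm]
  have := Matrix.det_permute ((finRotate (m+1))⁻¹ : Equiv.Perm (Fin (m+1))) (matL m)
  rw [this, det_matL]
  congr 1
  rw [map_inv, sign_finRotate]
  simp [Units.smul_def]

lemma matA_eq (m : ℕ) : matA (m+1) = matB m * matU m := by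
  refine Matrix.ext fun i j => ?_
  rw [Matrix.mul_apply]
  have hsum : ∀ k : Fin (m+1), matB m i k * matU m k j =
      if k = 0 then X 0 else
        if (k : ℕ) = (j : ℕ) + 1 ∧ k ≤ i then X 1 - X 0 else 0 := by
    intro k
    rw [matU_apply]
    rcases eq_or_ne k 0 with hk | hk
    · subst hk
      simp [matB, Fin.zero_le]
    · rw [if_neg hk, if_neg hk]
      by_cases hki : k ≤ i
      · simp [matB, hki]
      · have : ¬((k : ℕ) = (j : ℕ) + 1 ∧ k ≤ i) := fun h => hki h.2
        simp [matB, hki, this]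
  rw [Finset.sum_congr rfl fun k _ => hsum k]
  rw [Fin.sum_univ_succ, if_pos rfl]
  have hsucc : ∀ k : Fin m, (if (k.succ : Fin (m+1)) = 0 then (X 0 : R2) else
      if ((k.succ : Fin (m+1)) : ℕ) = (j : ℕ) + 1 ∧ (k.succ : Fin (m+1)) ≤ i then X 1 - X 0 else 0)
      = if (k : ℕ) = (j : ℕ) ∧ (j : ℕ) < (i : ℕ) then X 1 - X 0 else 0 := by
    intro k
    rw [if_neg (Fin.succ_ne_zero k)]
    congr 1
    simp only [Fin.val_succ, eq_iff_iff, Fin.le_def]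
    omega
  rw [Finset.sum_congr rfl fun k _ => hsucc k]
  by_cases hj : (j : ℕ) < (i : ℕ)
  · have hjm : (j : ℕ) < m := by
      have := i.isLt; omega
    have : (∑ k : Fin m, if (k : ℕ) = (j : ℕ) ∧ (j : ℕ) < (i : ℕ) then (X 1 - X 0 : R2) else 0)
        = X 1 - X 0 := by
      rw [Finset.sum_eq_single (⟨(j : ℕ), hjm⟩ : Fin m)]
      · simp [hj]
      · intro b _ hb
        have : (b : ℕ) ≠ (j : ℕ) := fun h => hb (Fin.ext (by simpa using h))
        simp [this]
      · simp
    rw [this]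
    have hij : (j : Fin (m+1)) < i := hj
    simp only [matA, Matrix.of_apply, if_pos hij]
    ring
  · have : (∑ k : Fin m, if (k : ℕ) = (j : ℕ) ∧ (j : ℕ) < (i : ℕ) then (X 1 - X 0 : R2) else 0)
        = 0 := by
      apply Finset.sum_eq_zero
      intro b _
      simp [hj]
    rw [this]
    have hij : ¬ (j : Fin (m+1)) < i := hj
    simp [matA, hij]

lemma det_matA (m : ℕ) : (matA (m+1)).det = X 0 * (X 0 - X 1) ^ m := by
  rw [matA_eq, Matrix.det_mul, det_matB, det_matU, one_mul]
  have h1 : ((-1 : R2))^m * (X 0 * (X 1 - X 0)^m) = X 0 * ((-1) * (X 1 - X 0))^m := by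
    rw [mul_pow]; ring
  have h2 : ((-1) * (X 1 - X 0) : R2) = X 0 - X 1 := by ring
  rw [h1, h2]

lemma excA_lt {n : ℕ} (hn : 1 ≤ n) (σ : Equiv.Perm (Fin n)) : excA σ < n := by
  have hlast : (⟨n - 1, by omega⟩ : Fin n) ∉
      (Finset.univ.filter (fun i : Fin n => i < σ i)) := by
    simp only [Finset.mem_filter, Finset.mem_univ, true_and, not_lt, Fin.le_def]
    have := (σ ⟨n - 1, by omega⟩).isLt
    omega
  have : (Finset.univ.filter (fun i : Fin n => i < σ i)) ≠ Finset.univ := by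
    intro h
    rw [h] at hlast
    exact hlast (Finset.mem_univ _)
  have := Finset.card_lt_card (Finset.ssubset_univ_iff.2 this)
  simpa [excA, Finset.card_univ] using this

lemma nexcA_pos {n : ℕ} (hn : 1 ≤ n) (σ : Equiv.Perm (Fin n)) : 1 ≤ nexcA σ := by
  have := excA_lt hn σ
  unfold nexcA
  omega

lemma prod_matA {n : ℕ} (σ : Equiv.Perm (Fin n)) :
    ∏ i, matA n (σ i) i = X 1 ^ excA σ * X 0 ^ nexcA σ := by
  have h : ∀ i, matA n (σ i) i = if i < σ i then X 1 else X 0 := fun i => rfl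
  rw [Finset.prod_congr rfl fun i _ => h i, Finset.prod_ite, Finset.prod_const,
    Finset.prod_const]
  congr 2
  have := Finset.card_filter_add_card_filter_not
    (s := (Finset.univ : Finset (Fin n))) (p := fun i : Fin n => i < σ i)
  simp only [Finset.card_univ, Fintype.card_fin] at this
  unfold nexcA excA
  omega

lemma signed_sum (m : ℕ) :
    ∑ σ : Equiv.Perm (Fin (m+1)),
        ((-1 : ℚ) ^ invA σ) • (X 1 ^ excA σ * X 0 ^ (nexcA σ - 1)) =
      ((X 0 - X 1 : R2)) ^ m := by
  apply mul_left_cancel₀ (X_ne_zero (R := ℚ) (0 : Fin 2))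
  rw [← det_matA, Matrix.det_apply, Finset.mul_sum]
  apply Finset.sum_congr rfl
  intro σ _
  have hne := nexcA_pos (by omega) σ
  have hw : ∏ i, matA (m+1) (σ i) i
      = X 0 * (X 1 ^ excA σ * X 0 ^ (nexcA σ - 1)) := by
    rw [prod_matA]
    have h1 : nexcA σ = (nexcA σ - 1) + 1 := by omega
    conv_lhs => rw [h1]
    rw [pow_succ]
    ring
  rw [hw, sign_eq_invA]
  rcases Nat.even_or_odd (invA σ) with h | h
  · rw [h.neg_one_pow, h.neg_one_pow, one_smul, one_smul]
  · rw [h.neg_one_pow, h.neg_one_pow, Units.smul_def]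
    push_cast
    rw [neg_one_zsmul, neg_one_smul]
    ring

lemma PM_diff (n : ℕ) :
    AexcP n - AexcM n
      = ∑ σ : Equiv.Perm (Fin n),
          ((-1 : ℚ) ^ invA σ) • (X 1 ^ excA σ * X 0 ^ (nexcA σ - 1)) := by
  rw [← Finset.sum_filter_add_sum_filter_not (Finset.univ)
    (fun σ : Equiv.Perm (Fin n) => Even (invA σ))]
  have h1 : ∑ σ ∈ Finset.univ.filter (fun σ : Equiv.Perm (Fin n) => Even (invA σ)),
      ((-1 : ℚ) ^ invA σ) • (X 1 ^ excA σ * X 0 ^ (nexcA σ - 1)) = AexcP n := by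
    apply Finset.sum_congr rfl
    intro σ hσ
    simp only [Finset.mem_filter] at hσ
    rw [hσ.2.neg_one_pow, one_smul]
  have h2 : ∑ σ ∈ Finset.univ.filter (fun σ : Equiv.Perm (Fin n) => ¬ Even (invA σ)),
      ((-1 : ℚ) ^ invA σ) • (X 1 ^ excA σ * X 0 ^ (nexcA σ - 1)) = -(AexcM n) := by
    rw [AexcM, ← Finset.sum_neg_distrib]
    apply Finset.sum_congr rfl
    intro σ hσ
    simp only [Finset.mem_filter] at hσ
    rw [(Nat.not_even_iff_odd.1 hσ.2).neg_one_pow, neg_one_smul]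
  rw [h1, h2]
  ring

lemma PM_sum (n : ℕ) : AexcP n + AexcM n = Aexc n :=
  Finset.sum_filter_add_sum_filter_not _ _ _

lemma Dop_add (f g : MvPolynomial (Fin 2) ℚ) : Dop (f + g) = Dop f + Dop g := by
  simp only [Dop, map_add]; ring

lemma Dop_sub (f g : MvPolynomial (Fin 2) ℚ) : Dop (f - g) = Dop f - Dop g := by
  simp only [Dop, map_sub]; ring

lemma Dop_pow_sub (m : ℕ) : Dop ((X 0 - X 1 : MvPolynomial (Fin 2) ℚ) ^ m) = 0 := by
  unfold Dop
  rw [Derivation.leibniz_pow, Derivation.leibniz_pow]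
  have h0 : pderiv (0 : Fin 2) ((X 0 - X 1 : MvPolynomial (Fin 2) ℚ)) = 1 := by
    simp [pderiv_X, Pi.single_apply]
  have h1 : pderiv (1 : Fin 2) ((X 0 - X 1 : MvPolynomial (Fin 2) ℚ)) = -1 := by
    simp [pderiv_X, Pi.single_apply]
  rw [h0, h1]
  simp

theorem stmt9 (n : ℕ) (hn : 2 ≤ n) :
    Dop (AexcP n) = Dop (AexcM n) ∧ Dop (AexcM n) = (1 / 2 : ℚ) • Dop (Aexc n) := by
  obtain ⟨m, rfl⟩ : ∃ m, n = m + 1 := ⟨n - 1, by omega⟩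
  have hdiff : AexcP (m+1) - AexcM (m+1) = (X 0 - X 1 : R2) ^ m := by
    rw [PM_diff, signed_sum]
  have hD : Dop (AexcP (m+1)) - Dop (AexcM (m+1)) = 0 := by
    rw [← Dop_sub, hdiff, Dop_pow_sub]
  have hPM : Dop (AexcP (m+1)) = Dop (AexcM (m+1)) := by
    linear_combination (norm := abel) hD
  refine ⟨hPM, ?_⟩
  have hA : Dop (Aexc (m+1)) = Dop (AexcM (m+1)) + Dop (AexcM (m+1)) := by
    rw [← PM_sum, Dop_add, hPM]
  rw [hA, smul_add, ← add_smul]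
  norm_num
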